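/- F_v(J_5, J_5; 5) ≤ 36. -/

import Mathlib

open SimpleGraph

/-- `Copies G F S`: `G` contains a copy of `F` all of whose vertices lie in `S`. -/
def Copies {α β : Type*} (G : SimpleGraph α) (F : SimpleGraph β) (S : Set α) : Prop :=
  ∃ f : β ↪ α, (∀ a b, F.Adj a b → G.Adj (f a) (f b)) ∧ ∀ a, f a ∈ S

/-- `G` vertex-arrows the family `F` of graphs. -/
def VArrows {α : Type*} (G : SimpleGraph α) {r : ℕ} {β : Fin r → Type*}
    (F : ∀ i, SimpleGraph (β i)) : Prop :=
  ∀ C : α → Fin r, ∃ i, Copies G (F i) {v | C v = i}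

/-- `G` vertex-arrows `(F1, F2)`. -/
def VArrows2 {α β γ : Type*} (G : SimpleGraph α) (F1 : SimpleGraph β) (F2 : SimpleGraph γ) :
    Prop :=
  ∀ C : α → Bool, Copies G F1 {v | C v = true} ∨ Copies G F2 {v | C v = false}

/-- `G` edge-arrows `(F1, F2)`: every red subgraph `R ≤ G` yields a red `F1` or a blue `F2`. -/
def EArrows2 {α β γ : Type*} (G : SimpleGraph α) (F1 : SimpleGraph β) (F2 : SimpleGraph γ) :
    Prop :=
  ∀ R : SimpleGraph α, R ≤ G → Copies R F1 Set.univ ∨ Copies (G \ R) F2 Set.univ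

/-- Vertex Folkman number for a family of target graphs. -/
noncomputable def Fv {r : ℕ} {β : Fin r → Type*} (F : ∀ i, SimpleGraph (β i)) (k : ℕ) : ℕ :=
  sInf {n | ∃ G : SimpleGraph (Fin n), G.CliqueFree k ∧ VArrows G F}

/-- Two-color vertex Folkman number. -/
noncomputable def Fv2 {β γ : Type*} (F1 : SimpleGraph β) (F2 : SimpleGraph γ) (k : ℕ) : ℕ :=
  sInf {n | ∃ G : SimpleGraph (Fin n), G.CliqueFree k ∧ VArrows2 G F1 F2}

/-- Two-color edge Folkman number. -/
noncomputable def Fe2 {β γ : Type*} (F1 : SimpleGraph β) (F2 : SimpleGraph γ) (k : ℕ) : ℕ :=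
  sInf {n | ∃ G : SimpleGraph (Fin n), G.CliqueFree k ∧ EArrows2 G F1 F2}

/-- Lexicographic product `G[H]`. -/
def lexProd {α β : Type*} (G : SimpleGraph α) (H : SimpleGraph β) : SimpleGraph (α × β) where
  Adj x y := G.Adj x.1 y.1 ∨ (x.1 = y.1 ∧ H.Adj x.2 y.2)
  symm := by constructor; rintro x y (h | ⟨e, h⟩); exacts [Or.inl h.symm, Or.inr ⟨e.symm, h.symm⟩]
  loopless := by constructor; rintro x (h | ⟨_, h⟩); exacts [G.irrefl h, H.irrefl h]

/-- Complete graph on `k` vertices. -/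
def Kc (k : ℕ) : SimpleGraph (Fin k) := completeGraph (Fin k)

/-- `J_k = K_k - e`: complete graph on `k` vertices minus one edge (the one
joining the two distinguished right-hand vertices). -/
def Jgraph (k : ℕ) : SimpleGraph (Fin (k - 2) ⊕ Fin 2) where
  Adj x y := x ≠ y ∧ ¬(x.isRight ∧ y.isRight)
  symm := ⟨fun x y ⟨h1, h2⟩ => ⟨h1.symm, fun ⟨a, b⟩ => h2 ⟨b, a⟩⟩⟩
  loopless := ⟨fun x h => h.1 rfl⟩

/-- Cycle on `n` vertices. -/
def cycle (n : ℕ) : SimpleGraph (ZMod n) where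
  Adj i j := i ≠ j ∧ (i - j = 1 ∨ j - i = 1)
  symm := ⟨fun i j ⟨h1, h2⟩ => ⟨h1.symm, h2.symm⟩⟩
  loopless := ⟨fun i h => h.1 rfl⟩

/-- Join of two graphs: disjoint union plus all cross edges. -/
def graphJoin {α β : Type*} (G : SimpleGraph α) (H : SimpleGraph β) :
    SimpleGraph (α ⊕ β) where
  Adj x y := (∃ a b, x = .inl a ∧ y = .inl b ∧ G.Adj a b) ∨
             (∃ a b, x = .inr a ∧ y = .inr b ∧ H.Adj a b) ∨
             (x.isLeft ∧ y.isRight) ∨ (x.isRight ∧ y.isLeft)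
  symm := by
    constructor
    rintro x y (⟨a, b, rfl, rfl, h⟩ | ⟨a, b, rfl, rfl, h⟩ | ⟨h1, h2⟩ | ⟨h1, h2⟩)
    · exact Or.inl ⟨b, a, rfl, rfl, h.symm⟩
    · exact Or.inr (Or.inl ⟨b, a, rfl, rfl, h.symm⟩)
    · exact Or.inr (Or.inr (Or.inr ⟨h2, h1⟩))
    · exact Or.inr (Or.inr (Or.inl ⟨h2, h1⟩))
  loopless := by
    constructor
    rintro x (⟨a, b, rfl, h, h'⟩ | ⟨a, b, rfl, h, h'⟩ | ⟨h1, h2⟩ | ⟨h1, h2⟩)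
    · cases h; exact G.irrefl h'
    · cases h; exact H.irrefl h'
    · cases x <;> simp_all
    · cases x <;> simp_all

/-- Clique number: the largest size of a clique. -/
noncomputable def cliqueNum' {α : Type*} (G : SimpleGraph α) : ℕ :=
  sSup {n | ∃ s : Finset α, G.IsNClique n s}

namespace FvAux

/-! ### Block adjacency as Bool functions on ℕ -/

def wadjB (i j : ℕ) : Bool := (i != j) && (j == (i+1)%8 || i == (j+1)%8 || j == (i+4)%8 || i == (j+4)%8)
def hadjB (i j : ℕ) : Bool := (i != j) && (j/2 == (i/2+1)%5 || i/2 == (j/2+1)%5)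
def cadjB (i j : ℕ) : Bool := (i != j) && (j == (i+1)%5 || i == (j+1)%5)

lemma wsymm : ∀ i j : Fin 8, wadjB i j → wadjB j i := by decide
lemma hsymm : ∀ i j : Fin 9, hadjB i j → hadjB j i := by decide
lemma csymm : ∀ i j : Fin 5, cadjB i j → cadjB j i := by decide
lemma wirr : ∀ i : Fin 8, ¬ (wadjB i i = true) := by decide
lemma hirr : ∀ i : Fin 9, ¬ (hadjB i i = true) := by decide
lemma cirr : ∀ i : Fin 5, ¬ (cadjB i i = true) := by decide

lemma tfW : ∀ u v w : Fin 8, wadjB u v → wadjB v w → wadjB u w → False := by decide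
lemma tfH : ∀ u v w : Fin 9, hadjB u v → hadjB v w → hadjB u w → False := by decide
lemma tfC : ∀ u v w : Fin 5, cadjB u v → cadjB v w → cadjB u w → False := by decide

/-! ### Edge / cherry existence as Bool computations -/

def hasEb (n : ℕ) (adj : ℕ → ℕ → Bool) (C : Fin n → Bool) (b : Bool) : Bool :=
  (List.finRange n).any fun u => (C u == b) &&
    ((List.finRange n).any fun v => adj u v && (C v == b))

def hasCb (n : ℕ) (adj : ℕ → ℕ → Bool) (C : Fin n → Bool) (b : Bool) : Bool :=
  (List.finRange n).any fun u => (C u == b) &&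
    ((List.finRange n).any fun v => adj u v && (C v == b) &&
      ((List.finRange n).any fun w => v != w && adj u w && (C w == b)))

lemma hasEb_sound {n : ℕ} {adj : ℕ → ℕ → Bool} {C : Fin n → Bool} {b : Bool}
    (h : hasEb n adj C b = true) :
    ∃ u v : Fin n, adj u v = true ∧ C u = b ∧ C v = b := by
  simp only [hasEb, List.any_eq_true, List.mem_finRange, Bool.and_eq_true, beq_iff_eq,
    true_and] at h
  obtain ⟨u, hu, v, hv, hcv⟩ := h
  exact ⟨u, v, hv, hu, hcv⟩

lemma hasCb_sound {n : ℕ} {adj : ℕ → ℕ → Bool} {C : Fin n → Bool} {b : Bool}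
    (h : hasCb n adj C b = true) :
    ∃ u v w : Fin n, adj u v = true ∧ adj u w = true ∧ v ≠ w ∧ C u = b ∧ C v = b ∧ C w = b := by
  simp only [hasCb, List.any_eq_true, List.mem_finRange, Bool.and_eq_true, beq_iff_eq,
    bne_iff_ne, true_and] at h
  obtain ⟨u, hu, v, ⟨hv, hcv⟩, w, ⟨hne, hw⟩, hcw⟩ := h
  exact ⟨u, v, w, hv, hw, hne, hu, hcv, hcw⟩

/-! ### Decided block facts -/

set_option maxRecDepth 100000 in
set_option maxHeartbeats 2000000 in
lemma factC_t : ∀ b0 b1 b2 b3 b4 : Bool,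
    (hasEb 5 cadjB ![b0,b1,b2,b3,b4] true || hasEb 5 cadjB ![b0,b1,b2,b3,b4] false) = true := by
  decide

set_option maxRecDepth 100000 in
set_option maxHeartbeats 4000000 in
lemma factH_t : ∀ b0 b1 b2 b3 b4 b5 b6 b7 b8 : Bool,
    (hasCb 9 hadjB ![b0,b1,b2,b3,b4,b5,b6,b7,b8] true ||
     hasCb 9 hadjB ![b0,b1,b2,b3,b4,b5,b6,b7,b8] false) = true := by
  decide

set_option maxRecDepth 100000 in
set_option maxHeartbeats 4000000 in
lemma factW_t : ∀ b0 b1 b2 b3 b4 b5 b6 b7 : Bool,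
    ((hasEb 8 wadjB ![b0,b1,b2,b3,b4,b5,b6,b7] true ||
      hasCb 8 wadjB ![b0,b1,b2,b3,b4,b5,b6,b7] false) &&
     (hasEb 8 wadjB ![b0,b1,b2,b3,b4,b5,b6,b7] false ||
      hasCb 8 wadjB ![b0,b1,b2,b3,b4,b5,b6,b7] true)) = true := by
  decide

lemma eqC (C : Fin 5 → Bool) : C = ![C 0, C 1, C 2, C 3, C 4] := by
  funext i; fin_cases i <;> rfl

lemma eqH (C : Fin 9 → Bool) : C = ![C 0, C 1, C 2, C 3, C 4, C 5, C 6, C 7, C 8] := by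
  funext i; fin_cases i <;> rfl

lemma eqW (C : Fin 8 → Bool) : C = ![C 0, C 1, C 2, C 3, C 4, C 5, C 6, C 7] := by
  funext i; fin_cases i <;> rfl

lemma factC' (C : Fin 5 → Bool) : ∃ b, hasEb 5 cadjB C b = true := by
  have h := factC_t (C 0) (C 1) (C 2) (C 3) (C 4)
  rw [← eqC C] at h
  rcases Bool.or_eq_true_iff.mp h with h | h
  exacts [⟨true, h⟩, ⟨false, h⟩]

lemma factH' (C : Fin 9 → Bool) : ∃ b, hasCb 9 hadjB C b = true := by
  have h := factH_t (C 0) (C 1) (C 2) (C 3) (C 4) (C 5) (C 6) (C 7) (C 8)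
  rw [← eqH C] at h
  rcases Bool.or_eq_true_iff.mp h with h | h
  exacts [⟨true, h⟩, ⟨false, h⟩]

lemma factW' (C : Fin 8 → Bool) (b : Bool) :
    hasEb 8 wadjB C b = true ∨ hasCb 8 wadjB C (!b) = true := by
  have h := factW_t (C 0) (C 1) (C 2) (C 3) (C 4) (C 5) (C 6) (C 7)
  rw [← eqW C] at h
  obtain ⟨h1, h2⟩ := Bool.and_eq_true_iff.mp h
  cases b
  · rcases Bool.or_eq_true_iff.mp h2 with h | h
    exacts [Or.inl h, Or.inr h]
  · rcases Bool.or_eq_true_iff.mp h1 with h | h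
    exacts [Or.inl h, Or.inr h]

/-! ### The 36-vertex graph: blocks W, H1, C1, H2, C2 substituted into a 5-cycle frame -/

abbrev V := (Fin 8 ⊕ Fin 9) ⊕ (Fin 5 ⊕ (Fin 9 ⊕ Fin 5))

def blk : V → Fin 5
  | .inl (.inl _) => 0
  | .inl (.inr _) => 1
  | .inr (.inl _) => 2
  | .inr (.inr (.inl _)) => 3
  | .inr (.inr (.inr _)) => 4

def fr (p q : Fin 5) : Prop := q = p + 1 ∨ p = q + 1

instance (p q : Fin 5) : Decidable (fr p q) := inferInstanceAs (Decidable (_ ∨ _))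

def la : V → V → Prop
  | .inl (.inl a), .inl (.inl b) => wadjB a b = true
  | .inl (.inr a), .inl (.inr b) => hadjB a b = true
  | .inr (.inl a), .inr (.inl b) => cadjB a b = true
  | .inr (.inr (.inl a)), .inr (.inr (.inl b)) => hadjB a b = true
  | .inr (.inr (.inr a)), .inr (.inr (.inr b)) => cadjB a b = true
  | _, _ => False

def Big : SimpleGraph V where
  Adj x y := la x y ∨ fr (blk x) (blk y)
  symm := by
    constructor
    rintro x y (h | h)
    · left
      rcases x with ((a|a)|(a|(a|a))) <;> rcases y with ((b|b)|(b|(b|b))) <;>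
        first
          | exact h.elim
          | exact wsymm _ _ h
          | exact hsymm _ _ h
          | exact csymm _ _ h
    · right
      rcases h with h | h
      exacts [Or.inr h, Or.inl h]
  loopless := by
    constructor
    rintro x (h | h)
    · rcases x with ((a|a)|(a|(a|a))) <;>
        first
          | exact wirr _ h
          | exact hirr _ h
          | exact cirr _ h
    · have : ∀ p : Fin 5, ¬ fr p p := by decide
      exact this _ h

lemma la_blk {x y : V} (h : la x y) : blk x = blk y := by
  rcases x with ((a|a)|(a|(a|a))) <;> rcases y with ((b|b)|(b|(b|b))) <;>
    first | exact h.elim | rfl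

lemma la_tri : ∀ x y z : V, la x y → la y z → la x z → False := by
  rintro ((a|a)|(a|(a|a))) ((b|b)|(b|(b|b))) ((c|c)|(c|(c|c))) h1 h2 h3 <;>
    first
      | exact h1.elim
      | exact h2.elim
      | exact h3.elim
      | exact tfW _ _ _ h1 h2 h3
      | exact tfH _ _ _ h1 h2 h3
      | exact tfC _ _ _ h1 h2 h3

lemma bigCF : Big.CliqueFree 5 := by
  intro s hs
  have hadj : ∀ x ∈ s, ∀ y ∈ s, x ≠ y → la x y ∨ fr (blk x) (blk y) :=
    fun x hx y hy hne => hs.1 hx hy hne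
  -- the image of blocks has at most 2 elements
  have hcard : (s.image blk).card ≤ 2 := by
    by_contra hgt
    push_neg at hgt
    obtain ⟨p, hp, q, hq, r, hr, hpq, hpr, hqr⟩ := Finset.two_lt_card.mp hgt
    simp only [Finset.mem_image] at hp hq hr
    obtain ⟨x, hx, rfl⟩ := hp
    obtain ⟨y, hy, rfl⟩ := hq
    obtain ⟨z, hz, rfl⟩ := hr
    have hxy : x ≠ y := fun h => hpq (by rw [h])
    have hxz : x ≠ z := fun h => hpr (by rw [h])
    have hyz : y ≠ z := fun h => hqr (by rw [h])
    have f1 : fr (blk x) (blk y) := (hadj x hx y hy hxy).resolve_left fun h => hpq (la_blk h)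
    have f2 : fr (blk y) (blk z) := (hadj y hy z hz hyz).resolve_left fun h => hqr (la_blk h)
    have f3 : fr (blk x) (blk z) := (hadj x hx z hz hxz).resolve_left fun h => hpr (la_blk h)
    have : ∀ p q r : Fin 5, p ≠ q → p ≠ r → q ≠ r → fr p q → fr q r → fr p r → False := by
      decide
    exact this _ _ _ hpq hpr hqr f1 f2 f3
  -- pigeonhole: some block contains at least 3 vertices of s
  have hmaps : ∀ x ∈ s, blk x ∈ s.image blk := fun x hx => Finset.mem_image_of_mem blk hx
  have hlt : (s.image blk).card * 2 < s.card := by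
    rw [hs.2]; omega
  obtain ⟨t, _, ht⟩ := Finset.exists_lt_card_fiber_of_mul_lt_card_of_maps_to hmaps hlt
  obtain ⟨x, hx, y, hy, z, hz, hxy, hxz, hyz⟩ := Finset.two_lt_card.mp ht
  simp only [Finset.mem_filter] at hx hy hz
  have hfr : ∀ a b : V, blk a = blk b → ¬ fr (blk a) (blk b) := by
    intro a b h
    rw [h]
    have : ∀ p : Fin 5, ¬ fr p p := by decide
    exact this _
  have l1 : la x y :=
    (hadj x hx.1 y hy.1 hxy).resolve_right (hfr x y (hx.2.trans hy.2.symm))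
  have l2 : la y z :=
    (hadj y hy.1 z hz.1 hyz).resolve_right (hfr y z (hy.2.trans hz.2.symm))
  have l3 : la x z :=
    (hadj x hx.1 z hz.1 hxz).resolve_right (hfr x z (hx.2.trans hz.2.symm))
  exact la_tri x y z l1 l2 l3

/-! ### Building a monochromatic `J_5` from an edge and a cherry in adjacent blocks -/

lemma copies_of_clash {α : Type*} (G : SimpleGraph α) (S : Set α) (u v w x y : α)
    (huv : G.Adj u v) (huw : G.Adj u w) (hvw : G.Adj v w)
    (hux : G.Adj u x) (huy : G.Adj u y) (hvx : G.Adj v x) (hvy : G.Adj v y)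
    (hwx : G.Adj w x) (hwy : G.Adj w y) (hxy : x ≠ y)
    (mu : u ∈ S) (mv : v ∈ S) (mw : w ∈ S) (mx : x ∈ S) (my : y ∈ S) :
    Copies G (Jgraph 5) S := by
  have n1 : u ≠ v := huv.ne
  have n2 : u ≠ w := huw.ne
  have n3 : v ≠ w := hvw.ne
  have n4 : u ≠ x := hux.ne
  have n5 : u ≠ y := huy.ne
  have n6 : v ≠ x := hvx.ne
  have n7 : v ≠ y := hvy.ne
  have n8 : w ≠ x := hwx.ne
  have n9 : w ≠ y := hwy.ne
  have s1 : G.Adj v u := huv.symm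
  have s2 : G.Adj w u := huw.symm
  have s3 : G.Adj w v := hvw.symm
  have s4 : G.Adj x u := hux.symm
  have s5 : G.Adj y u := huy.symm
  have s6 : G.Adj x v := hvx.symm
  have s7 : G.Adj y v := hvy.symm
  have s8 : G.Adj x w := hwx.symm
  have s9 : G.Adj y w := hwy.symm
  refine ⟨⟨Sum.elim ![u, v, w] ![x, y], ?_⟩, ?_, ?_⟩
  · rintro (a | a) (b | b) h <;> fin_cases a <;> fin_cases b <;> simp_all
  · rintro (a | a) (b | b) h <;> fin_cases a <;> fin_cases b <;> simp_all [Jgraph] <;> assumption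
  · rintro (a | a) <;> fin_cases a <;> assumption

/-! ### Block embeddings into `V` -/

def iW : Fin 8 → V := fun a => .inl (.inl a)
def iH1 : Fin 9 → V := fun a => .inl (.inr a)
def iC1 : Fin 5 → V := fun a => .inr (.inl a)
def iH2 : Fin 9 → V := fun a => .inr (.inr (.inl a))
def iC2 : Fin 5 → V := fun a => .inr (.inr (.inr a))

lemma adjW {a b : Fin 8} (h : wadjB a b = true) : Big.Adj (iW a) (iW b) := Or.inl h
lemma adjH1 {a b : Fin 9} (h : hadjB a b = true) : Big.Adj (iH1 a) (iH1 b) := Or.inl h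
lemma adjC1 {a b : Fin 5} (h : cadjB a b = true) : Big.Adj (iC1 a) (iC1 b) := Or.inl h
lemma adjH2 {a b : Fin 9} (h : hadjB a b = true) : Big.Adj (iH2 a) (iH2 b) := Or.inl h
lemma adjC2 {a b : Fin 5} (h : cadjB a b = true) : Big.Adj (iC2 a) (iC2 b) := Or.inl h

lemma adj_C1_H1 (a : Fin 5) (b : Fin 9) : Big.Adj (iC1 a) (iH1 b) := Or.inr (show fr 2 1 by decide)
lemma adj_C1_H2 (a : Fin 5) (b : Fin 9) : Big.Adj (iC1 a) (iH2 b) := Or.inr (show fr 2 3 by decide)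
lemma adj_W_H1 (a : Fin 8) (b : Fin 9) : Big.Adj (iW a) (iH1 b) := Or.inr (show fr 0 1 by decide)
lemma adj_C2_H2 (a : Fin 5) (b : Fin 9) : Big.Adj (iC2 a) (iH2 b) := Or.inr (show fr 4 3 by decide)
lemma adj_C2_W (a : Fin 5) (b : Fin 8) : Big.Adj (iC2 a) (iW b) := Or.inr (show fr 4 0 by decide)

lemma iH1_inj {a b : Fin 9} (h : iH1 a = iH1 b) : a = b := by
  simpa [iH1] using h
lemma iH2_inj {a b : Fin 9} (h : iH2 a = iH2 b) : a = b := by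
  simpa [iH2] using h
lemma iW_inj {a b : Fin 8} (h : iW a = iW b) : a = b := by
  simpa [iW] using h

/-- From a monochromatic edge and a monochromatic cherry (same colour `b`) with all nine
cross adjacencies, produce a monochromatic copy of `J_5`. -/
lemma clash_done (C : V → Bool) (b : Bool) (u v w x y : V)
    (huv : Big.Adj u v) (huw : Big.Adj u w) (hvw : Big.Adj v w)
    (hux : Big.Adj u x) (huy : Big.Adj u y) (hvx : Big.Adj v x) (hvy : Big.Adj v y)
    (hwx : Big.Adj w x) (hwy : Big.Adj w y) (hxy : x ≠ y)
    (cu : C u = b) (cv : C v = b) (cw : C w = b) (cx : C x = b) (cy : C y = b) :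
    Copies Big (Jgraph 5) {t | C t = true} ∨ Copies Big (Jgraph 5) {t | C t = false} := by
  cases b
  · exact Or.inr (copies_of_clash Big _ u v w x y huv huw hvw hux huy hvx hvy hwx hwy hxy
      cu cv cw cx cy)
  · exact Or.inl (copies_of_clash Big _ u v w x y huv huw hvw hux huy hvx hvy hwx hwy hxy
      cu cv cw cx cy)

/-! ### The arrowing property -/

lemma bigArrows : VArrows2 Big (Jgraph 5) (Jgraph 5) := by
  intro C
  obtain ⟨b1, h1⟩ := factH' (fun a => C (iH1 a))
  obtain ⟨b2, h2⟩ := factH' (fun a => C (iH2 a))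
  obtain ⟨a0, ha0⟩ := factC' (fun a => C (iC1 a))
  obtain ⟨r1, s1, t1, hr1s1, hr1t1, hs1t1, cr1, cs1, ct1⟩ := hasCb_sound h1
  obtain ⟨r2, s2, t2, hr2s2, hr2t2, hs2t2, cr2, cs2, ct2⟩ := hasCb_sound h2
  obtain ⟨p0, q0, hp0q0, cp0, cq0⟩ := hasEb_sound ha0
  by_cases e1 : a0 = b1
  · -- edge in C1 and cherry in H1, both of colour b1
    subst e1
    exact clash_done C a0 (iC1 p0) (iC1 q0) (iH1 r1) (iH1 s1) (iH1 t1)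
      (adjC1 hp0q0) (adj_C1_H1 _ _) (adj_C1_H1 _ _) (adj_C1_H1 _ _) (adj_C1_H1 _ _)
      (adj_C1_H1 _ _) (adj_C1_H1 _ _) (adjH1 hr1s1) (adjH1 hr1t1)
      (fun h => hs1t1 (iH1_inj h)) cp0 cq0 cr1 cs1 ct1
  · by_cases e2 : a0 = b2
    · -- edge in C1 and cherry in H2, both of colour b2
      subst e2
      exact clash_done C a0 (iC1 p0) (iC1 q0) (iH2 r2) (iH2 s2) (iH2 t2)
        (adjC1 hp0q0) (adj_C1_H2 _ _) (adj_C1_H2 _ _) (adj_C1_H2 _ _) (adj_C1_H2 _ _)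
        (adj_C1_H2 _ _) (adj_C1_H2 _ _) (adjH2 hr2s2) (adjH2 hr2t2)
        (fun h => hs2t2 (iH2_inj h)) cp0 cq0 cr2 cs2 ct2
    · have hb1 : b1 = !a0 := by revert e1; cases a0 <;> cases b1 <;> simp
      have hb2 : b2 = !a0 := by revert e2; cases a0 <;> cases b2 <;> simp
      subst hb1; subst hb2
      rcases factW' (fun a => C (iW a)) (!a0) with hw | hw
      · -- edge in W of colour !a0 and cherry in H1 of colour !a0
        obtain ⟨p, q, hpq, cp, cq⟩ := hasEb_sound hw
        exact clash_done C (!a0) (iW p) (iW q) (iH1 r1) (iH1 s1) (iH1 t1)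
          (adjW hpq) (adj_W_H1 _ _) (adj_W_H1 _ _) (adj_W_H1 _ _) (adj_W_H1 _ _)
          (adj_W_H1 _ _) (adj_W_H1 _ _) (adjH1 hr1s1) (adjH1 hr1t1)
          (fun h => hs1t1 (iH1_inj h)) cp cq cr1 cs1 ct1
      · -- cherry in W of colour a0
        rw [Bool.not_not] at hw
        obtain ⟨r3, s3, t3, hr3s3, hr3t3, hs3t3, cr3, cs3, ct3⟩ := hasCb_sound hw
        obtain ⟨a1, ha1⟩ := factC' (fun a => C (iC2 a))
        obtain ⟨p1, q1, hp1q1, cp1, cq1⟩ := hasEb_sound ha1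
        by_cases e3 : a1 = !a0
        · -- edge in C2 and cherry in H2, both of colour !a0
          subst e3
          exact clash_done C (!a0) (iC2 p1) (iC2 q1) (iH2 r2) (iH2 s2) (iH2 t2)
            (adjC2 hp1q1) (adj_C2_H2 _ _) (adj_C2_H2 _ _) (adj_C2_H2 _ _) (adj_C2_H2 _ _)
            (adj_C2_H2 _ _) (adj_C2_H2 _ _) (adjH2 hr2s2) (adjH2 hr2t2)
            (fun h => hs2t2 (iH2_inj h)) cp1 cq1 cr2 cs2 ct2
        · have ha1' : a1 = a0 := by revert e3; cases a0 <;> cases a1 <;> simp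
          subst ha1'
          -- edge in C2 and cherry in W, both of colour a1
          exact clash_done C a1 (iC2 p1) (iC2 q1) (iW r3) (iW s3) (iW t3)
            (adjC2 hp1q1) (adj_C2_W _ _) (adj_C2_W _ _) (adj_C2_W _ _) (adj_C2_W _ _)
            (adj_C2_W _ _) (adj_C2_W _ _) (adjW hr3s3) (adjW hr3t3)
            (fun h => hs3t3 (iW_inj h)) cp1 cq1 cr3 cs3 ct3

lemma cardV : Fintype.card V = 36 := by simp

end FvAux

open FvAux in
/-- `F_v(J_5, J_5; 5) ≤ 36`. -/
theorem Fv_J5_J5_le_36 : Fv2 (Jgraph 5) (Jgraph 5) 5 ≤ 36 := by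
  have e : V ≃ Fin 36 := Fintype.equivFinOfCardEq cardV
  let f : Fin 36 ↪ V := e.symm.toEmbedding
  refine Nat.sInf_le ⟨Big.comap f, bigCF.comap (SimpleGraph.Embedding.comap f Big).isContained, ?_⟩
  intro C
  have key : ∀ b : Bool, Copies Big (Jgraph 5) {v | C (e v) = b} →
      Copies (Big.comap f) (Jgraph 5) {x | C x = b} := by
    rintro b ⟨g, hadj, hmem⟩
    refine ⟨g.trans e.toEmbedding, fun a b' hab => ?_, fun a => ?_⟩
    · show Big.Adj (f (e (g a))) (f (e (g b')))
      simpa [f] using hadj a b' hab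
    · exact hmem a
  rcases bigArrows (fun v => C (e v)) with h | h
  · exact Or.inl (key true h)
  · exact Or.inr (key false h)
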